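/- Let a, n, p ∈ ℤ with a ≥ 1, n ≥ 2 and p a prime, and let f_{n,a,p}(x) = x^n − a·x^{n−1} − p ∈ ℤ[x]. Then the discriminant of f_{n,a,p}, defined as (−1)^{n(n−1)/2} times the resultant of f_{n,a,p} and its derivative (equivalently, the product of (α_i − α_j)^2 over all unordered pairs of roots α_i, α_j of f_{n,a,p} in ℂ counted with multiplicity), equals (−1)^{(n−1)(n+2)/2} · p^{n−2} · (n^n·p + a^n·(n−1)^{n−1}). -/

import Mathlib

open Polynomial

/-- The polynomial `f_{n,a,p}(x) = x^n - a*x^(n-1) - p` in `ℤ[x]`. -/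
noncomputable def fnap (n : ℕ) (a p : ℤ) : Polynomial ℤ :=
  X ^ n - C a * X ^ (n - 1) - C p

open Finset in

lemma my_derivative_finset_prod {R : Type*} [CommSemiring R] {ι : Type*} [DecidableEq ι]
    (s : Finset ι) (f : ι → Polynomial R) :
    derivative (∏ b ∈ s, f b) = ∑ b ∈ s, (∏ a ∈ s.erase b, f a) * derivative (f b) := by
  classical
  induction s using Finset.induction_on with
  | empty => simp
  | insert _ _ h ih =>
    rename_i c s'
    rw [Finset.prod_insert h, derivative_mul, Finset.sum_insert h, ih, Finset.erase_insert h,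
      Finset.mul_sum]
    congr 1
    · ring
    · apply Finset.sum_congr rfl
      intro b hb
      rw [Finset.erase_insert_of_ne (by rintro rfl; exact h hb), Finset.prod_insert
        (fun hc => h (Finset.mem_of_mem_erase hc))]
      ring

lemma my_eval_deriv {n : ℕ} (α : Fin n → ℂ) (i : Fin n) :
    eval (α i) (derivative (∏ j, (X - C (α j)))) = ∏ j ∈ ({i}ᶜ : Finset (Fin n)), (α i - α j) := by
  rw [my_derivative_finset_prod, eval_finset_sum, Finset.sum_eq_single i]
  · simp [Finset.compl_eq_univ_sdiff, Finset.sdiff_singleton_eq_erase, eval_prod]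
  · intro b _ hb
    rw [eval_mul, eval_prod, Finset.prod_eq_zero (i := i)
      (Finset.mem_erase.2 ⟨fun h => hb h.symm, Finset.mem_univ i⟩) (by simp), zero_mul]
  · simp

lemma my_sum_card_Ioi (n : ℕ) : ∑ i : Fin n, (Finset.Ioi i).card = n * (n-1) / 2 := by
  simp_rw [Fin.card_Ioi]
  rw [Fin.sum_univ_eq_sum_range, Finset.sum_range_reflect (fun j => j) n,
    Finset.sum_range_id]

lemma my_sign_split {n : ℕ} (α : Fin n → ℂ) :
    ∏ i, ∏ j ∈ Finset.Ioi i, (α i - α j) ^ 2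
      = (-1)^(n*(n-1)/2) * ∏ i, ∏ j ∈ ({i}ᶜ : Finset (Fin n)), (α i - α j) := by
  have h := Finset.prod_prod_Ioi_mul_eq_prod_prod_off_diag (fun x y : Fin n => α y - α x)
  have key : ∀ i j : Fin n, (α i - α j)^2 = -1 * ((α i - α j) * (α j - α i)) := by intros; ring
  simp_rw [key, Finset.prod_mul_distrib, Finset.prod_const]
  rw [Finset.prod_pow_eq_pow_sum, my_sum_card_Ioi, ← Finset.prod_mul_distrib]
  simp_rw [← Finset.prod_mul_distrib]
  rw [h]

lemma my_neg_prod {k : ℕ} (f : Fin k → ℂ) : ∏ i, (-f i) = (-1:ℂ)^k * ∏ i, f i := by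
  rw [show (∏ i, (-f i)) = ∏ i, ((-1) * f i) from Finset.prod_congr rfl (fun i _ => by ring),
    Finset.prod_mul_distrib, Finset.prod_const, Finset.card_univ, Fintype.card_fin]

lemma my_sign (k : ℕ) :
    (-1:ℂ)^((k+2)*(k+1)/2) * ((-1:ℂ)^(k+3))^k * (-1:ℂ)^(k+1) = (-1:ℂ)^((k+1)*(k+4)/2) := by
  have h24 : (k+1)*(k+4)/2 = (k+2)*(k+1)/2 + (k+1) := by
    obtain ⟨t, ht⟩ := Nat.even_mul_succ_self (k+1)
    have h1 : (k+1)*(k+4) = (k+1)*(k+2) + 2*(k+1) := by ring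
    have h2 : (k+2)*(k+1) = (k+1)*(k+2) := by ring
    rw [h1, h2, ht]
    omega
  have h3 : ((-1:ℂ)^(k+3))^k = 1 := by
    rw [← pow_mul]
    apply Even.neg_one_pow
    rcases Nat.even_or_odd k with h | h
    · exact h.mul_left _
    · exact (h.add_odd (by decide : Odd 3)).mul_right k
  rw [h3, h24, pow_add]
  ring

/-- The discriminant of `f_{n,a,p}`, computed as the product of `(α_i - α_j)^2` over
all unordered pairs of complex roots `α_1, …, α_n` of `f_{n,a,p}` (with multiplicity),
equals `(-1)^((n-1)(n+2)/2) * p^(n-2) * (n^n * p + a^n * (n-1)^(n-1))`. -/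
theorem stmt_17 (a : ℤ) (n : ℕ) (p : ℕ) (ha : 1 ≤ a) (hn : 2 ≤ n) (hp : p.Prime)
    (α : Fin n → ℂ)
    (hα : (fnap n a (p : ℤ)).map (algebraMap ℤ ℂ) = ∏ i, (X - C (α i))) :
    ∏ i, ∏ j ∈ Finset.Ioi i, (α i - α j) ^ 2 =
      (((-1) ^ ((n - 1) * (n + 2) / 2) * (p : ℤ) ^ (n - 2) *
        ((n : ℤ) ^ n * (p : ℤ) + a ^ n * ((n : ℤ) - 1) ^ (n - 1)) : ℤ) : ℂ) := by
  obtain ⟨k, rfl⟩ : ∃ k, n = k + 2 := ⟨n - 2, by omega⟩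
  set A : ℂ := (a : ℂ) with hA
  set P : ℂ := (p : ℂ) with hP
  have hF : (∏ i, (X - C (α i)) : ℂ[X]) = X^(k+2) - C A * X^(k+1) - C P := by
    rw [← hα]
    simp [fnap, Polynomial.map_sub, Polynomial.map_mul, Polynomial.map_pow]
    rw [hA, hP, C_eq_intCast a, C_eq_natCast p]
  -- evaluation of the derivative at each root
  have heval : ∀ i, ∏ j ∈ ({i}ᶜ : Finset (Fin (k+2))), (α i - α j)
      = α i ^ k * (((k:ℂ)+2) * α i - A*((k:ℂ)+1)) := by
    intro i
    rw [← my_eval_deriv, hF]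
    simp [derivative_X_pow]
    push_cast
    ring
  -- product of the roots
  have hprod : (∏ i, α i) = (-1:ℂ)^(k+3) * P := by
    have h0 : ∏ i, (0 - α i) = -P := by
      have := congrArg (eval 0) hF
      simpa [eval_prod] using this
    have h1 : ∏ i, (-α i) = -P := by simpa using h0
    have h2 := (my_neg_prod α).symm.trans h1
    have h4 : (-1:ℂ)^(k+2) * ((-1:ℂ)^(k+2) * ∏ i, α i) = (-1:ℂ)^(k+2) * (-P) := by rw [h2]
    have h5 : ((-1:ℂ))^((k+2)+(k+2)) = 1 := Even.neg_one_pow ⟨k+2, rfl⟩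
    rw [← mul_assoc, ← pow_add, h5, one_mul] at h4
    rw [h4]
    ring
  -- the other factor
  have hN : ((k:ℂ)+2) ≠ 0 := by
    have : ((k+2 : ℕ) : ℂ) ≠ 0 := Nat.cast_ne_zero.2 (by omega)
    push_cast at this
    exact this
  have hc : ∏ i, (((k:ℂ)+2) * α i - A*((k:ℂ)+1))
      = (-1:ℂ)^(k+1) * (A^(k+2)*((k:ℂ)+1)^(k+1) + P*((k:ℂ)+2)^(k+2)) := by
    set c : ℂ := A*((k:ℂ)+1)/((k:ℂ)+2) with hcdef
    have hc1 : c * ((k:ℂ)+2) = A*((k:ℂ)+1) := by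
      rw [hcdef]; exact div_mul_cancel₀ _ hN
    have hfac : ∀ i, ((k:ℂ)+2) * α i - A*((k:ℂ)+1) = (-((k:ℂ)+2)) * (c - α i) := by
      intro i
      rw [← hc1]
      ring
    rw [Finset.prod_congr rfl fun i _ => hfac i, Finset.prod_mul_distrib, Finset.prod_const,
      Finset.card_univ, Fintype.card_fin]
    have hevalc : ∏ i, (c - α i) = c^(k+2) - A*c^(k+1) - P := by
      have := congrArg (eval c) hF
      simpa [eval_prod] using this
    rw [hevalc]
    have h1 : ((k:ℂ)+2)^(k+2) * c^(k+2) = (A*((k:ℂ)+1))^(k+2) := by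
      rw [← mul_pow, mul_comm, hc1]
    have h2 : ((k:ℂ)+2)^(k+2) * (A * c^(k+1)) = A * ((k:ℂ)+2) * (A*((k:ℂ)+1))^(k+1) := by
      rw [pow_succ ((k:ℂ)+2) (k+1)]
      rw [show ((k:ℂ)+2)^(k+1) * ((k:ℂ)+2) * (A * c^(k+1))
          = A * ((k:ℂ)+2) * (((k:ℂ)+2)^(k+1) * c^(k+1)) from by ring]
      rw [← mul_pow, mul_comm ((k:ℂ)+2) c, hc1]
    have key : ((k:ℂ)+2)^(k+2) * (c^(k+2) - A*c^(k+1) - P)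
        = -(A^(k+2)*((k:ℂ)+1)^(k+1) + P*((k:ℂ)+2)^(k+2)) := by
      rw [mul_sub, mul_sub, h1, h2, mul_pow, mul_pow]
      ring
    rw [neg_pow, mul_assoc, key, pow_succ (-1:ℂ) (k+1)]
    ring
  -- assemble
  rw [my_sign_split, Finset.prod_congr rfl fun i _ => heval i, Finset.prod_mul_distrib,
    Finset.prod_pow, hprod, hc]
  have e1 : k+2-1 = k+1 := rfl
  have e2 : k+2-2 = k := rfl
  have e3 : k+2+2 = k+4 := rfl
  rw [e1, e2, e3]
  push_cast
  linear_combination (P^k * (A^(k+2)*((k:ℂ)+1)^(k+1) + P*((k:ℂ)+2)^(k+2))) * my_sign k
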